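/- Let Δ be a finite index subgroup of SL(n+1,ℤ) and γ ∈ SL(n+1,ℤ). Then the set Δ\ΔγH_a is a closed subset of the quotient Δ\SL(n+1,ℝ). Specifically, if a sequence Δγh_j a(y_j) with h_j ∈ H and y_j ≥ 1 converges in Δ\SL(n+1,ℝ) to Δg, then Δg ∈ Δ\ΔγH_a. -/

import Mathlib

open Matrix

noncomputable section

abbrev SL (m : ℕ) (R : Type) [CommRing R] := Matrix.SpecialLinearGroup (Fin m) R

def lastVec (n : ℕ) (R : Type) [CommRing R] : Fin (n+1) → R := Pi.single (Fin.last n) 1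

def Primitive {n : ℕ} (a : Fin (n+1) → ℤ) : Prop := Finset.univ.gcd a = 1

/-- The stabilizer of the row vector (0,...,0,1) under right multiplication. -/
def stab (n : ℕ) (R : Type) [CommRing R] : Subgroup (SL (n+1) R) where
  carrier := {γ | Matrix.vecMul (lastVec n R) (γ : Matrix (Fin (n+1)) (Fin (n+1)) R) = lastVec n R}
  one_mem' := by simp
  mul_mem' := by
    intro a b ha hb
    simp only [Set.mem_setOf_eq] at *
    rw [Matrix.SpecialLinearGroup.coe_mul, ← Matrix.vecMul_vecMul, ha, hb]
  inv_mem' := by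
    intro a ha
    simp only [Set.mem_setOf_eq] at *
    conv_lhs => rw [← ha]
    rw [Matrix.vecMul_vecMul, ← Matrix.SpecialLinearGroup.coe_mul, mul_inv_cancel,
      Matrix.SpecialLinearGroup.coe_one, Matrix.vecMul_one]

/-- The diagonal matrix a(y) = diag(y^{1/n} I_n, y⁻¹). -/
def aMat (n : ℕ) (y : ℝ) : Matrix (Fin (n+1)) (Fin (n+1)) ℝ :=
  Matrix.diagonal (fun i => if i = Fin.last n then y⁻¹ else y ^ ((n : ℝ)⁻¹))

/-- The unipotent matrix h(x), with bottom-left row −x. -/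
def hMat {n : ℕ} (x : Fin n → ℝ) : Matrix (Fin (n+1)) (Fin (n+1)) ℝ :=
  fun i j => if i = j then 1 else
    if i = Fin.last n then (if hj : j = Fin.last n then 0 else -x (j.castPred hj)) else 0

/-- The unipotent integer matrix u(x). -/
def uMat {n : ℕ} (x : Fin n → ℤ) : Matrix (Fin (n+1)) (Fin (n+1)) ℤ :=
  fun i j => if i = j then 1 else
    if i = Fin.last n then (if hj : j = Fin.last n then 0 else x (j.castPred hj)) else 0

/-- The Euclidean norm on ℝ^n. -/
def enorm {n : ℕ} (v : Fin n → ℝ) : ℝ := Real.sqrt (∑ i, (v i)^2)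

abbrev mapSL (n : ℕ) : SL (n+1) ℤ →* SL (n+1) ℝ :=
  Matrix.SpecialLinearGroup.map (Int.castRingHom ℝ)

instance (m : ℕ) : TopologicalSpace (SL m ℝ) :=
  TopologicalSpace.induced (fun A => (A : Matrix (Fin m) (Fin m) ℝ)) inferInstance

section Helpers
variable {n : ℕ}

lemma castFun_lastVec (n : ℕ) :
    (Int.castRingHom ℝ) ∘ lastVec n ℤ = lastVec n ℝ := by
  ext i
  by_cases hi : i = Fin.last n <;> simp [lastVec, Pi.single_apply, hi]

lemma castFun_vecMul (v : Fin (n+1) → ℤ) (M : Matrix (Fin (n+1)) (Fin (n+1)) ℤ) :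
    (Int.castRingHom ℝ) ∘ (v ᵥ* M) = ((Int.castRingHom ℝ) ∘ v) ᵥ* (M.map (Int.castRingHom ℝ)) := by
  ext i
  exact RingHom.map_vecMul (Int.castRingHom ℝ) M v i

lemma lastVec_vecMul_aMat (n : ℕ) (y : ℝ) :
    lastVec n ℝ ᵥ* aMat n y = y⁻¹ • lastVec n ℝ := by
  ext i
  rw [aMat, vecMul_diagonal]
  by_cases hi : i = Fin.last n <;> simp [lastVec, Pi.single_apply, hi]

lemma det_aMat (n : ℕ) (hn : 1 ≤ n) {y : ℝ} (hy : 0 < y) :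
    (aMat n y).det = 1 := by
  rw [aMat, det_diagonal, Fin.prod_univ_castSucc]
  have h1 : ∀ i : Fin n,
      (if (Fin.castSucc i) = Fin.last n then y⁻¹ else y ^ ((n:ℝ)⁻¹)) = y ^ ((n:ℝ)⁻¹) := by
    intro i; rw [if_neg (Fin.castSucc_lt_last i).ne]
  simp only [h1, if_pos rfl, Finset.prod_const, Finset.card_univ, Fintype.card_fin, if_true]
  rw [← Real.rpow_natCast (y ^ ((n:ℝ)⁻¹)) n, ← Real.rpow_mul hy.le,
    inv_mul_cancel₀ (Nat.cast_ne_zero.mpr (by omega) : (n:ℝ) ≠ 0), Real.rpow_one,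
    mul_inv_cancel₀ hy.ne']

def Kc (n : ℕ) : Set (Fin (n+1) → ℝ) :=
  {u | ∀ i, u i ∈ (if i = Fin.last n then Set.Icc (0:ℝ) 1 else {0})}

lemma isClosed_Kc (n : ℕ) : IsClosed (Kc n) := by
  have h : Kc n = ⋂ i, (fun u : Fin (n+1) → ℝ => u i) ⁻¹'
      (if i = Fin.last n then Set.Icc (0:ℝ) 1 else {0}) := by
    ext u; simp [Kc, Set.mem_iInter]
  rw [h]
  refine isClosed_iInter fun i => IsClosed.preimage (continuous_apply i) ?_
  split_ifs
  · exact isClosed_Icc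
  · exact isClosed_singleton

lemma Kc_eq_smul {n : ℕ} {u : Fin (n+1) → ℝ} (hu : u ∈ Kc n) :
    u = u (Fin.last n) • lastVec n ℝ := by
  ext i
  by_cases hi : i = Fin.last n
  · subst hi; simp [lastVec, Pi.single_apply]
  · have h := hu i
    rw [if_neg hi] at h
    simp only [Set.mem_singleton_iff] at h
    simp [lastVec, Pi.single_apply, hi, h]

lemma smul_lastVec_mem_Kc {n : ℕ} {y : ℝ} (hy : 1 ≤ y) : y⁻¹ • lastVec n ℝ ∈ Kc n := by
  intro i
  by_cases hi : i = Fin.last n <;>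
    simp [lastVec, Pi.single_apply, hi, Set.mem_Icc,
      inv_nonneg.mpr (le_trans zero_le_one hy), inv_le_one_of_one_le₀ hy]

lemma vecMul_coe_inv {m : ℕ} (A : SL m ℝ) (w : Fin m → ℝ) :
    (w ᵥ* (A : Matrix (Fin m) (Fin m) ℝ)) ᵥ* ((A⁻¹ : SL m ℝ) : Matrix (Fin m) (Fin m) ℝ) = w := by
  rw [vecMul_vecMul, ← Matrix.SpecialLinearGroup.coe_mul, mul_inv_cancel,
    Matrix.SpecialLinearGroup.coe_one, vecMul_one]

lemma coe_mapSL {n : ℕ} (m : SL (n+1) ℤ) :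
    ((mapSL n m : SL (n+1) ℝ) : Matrix (Fin (n+1)) (Fin (n+1)) ℝ)
      = ((m : Matrix (Fin (n+1)) (Fin (n+1)) ℤ)).map (Int.castRingHom ℝ) := by
  simp [mapSL, Matrix.SpecialLinearGroup.map_apply_coe]

lemma castv_vecMul_map {n : ℕ} (m : SL (n+1) ℤ) :
    ((Int.castRingHom ℝ) ∘ (lastVec n ℤ ᵥ* ((m⁻¹ : SL (n+1) ℤ) : Matrix (Fin (n+1)) (Fin (n+1)) ℤ)))
      ᵥ* ((mapSL n m : SL (n+1) ℝ) : Matrix (Fin (n+1)) (Fin (n+1)) ℝ) = lastVec n ℝ := by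
  rw [coe_mapSL, ← castFun_vecMul, vecMul_vecMul, ← Matrix.SpecialLinearGroup.coe_mul,
    inv_mul_cancel, Matrix.SpecialLinearGroup.coe_one, vecMul_one, castFun_lastVec]

lemma lastVec_vecMul_map_inv {n : ℕ} (m : SL (n+1) ℤ) :
    lastVec n ℝ ᵥ* (((mapSL n m)⁻¹ : SL (n+1) ℝ) : Matrix (Fin (n+1)) (Fin (n+1)) ℝ)
      = (Int.castRingHom ℝ) ∘ (lastVec n ℤ ᵥ* ((m⁻¹ : SL (n+1) ℤ) : Matrix (Fin (n+1)) (Fin (n+1)) ℤ)) := by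
  rw [← map_inv, coe_mapSL, castFun_vecMul, castFun_lastVec]

end Helpers

/-- For a finite index subgroup Δ ⊆ SL(n+1,ℤ) and γ ∈ SL(n+1,ℤ), the image of the
set ΔγH_a in the quotient Δ\SL(n+1,ℝ) is closed. -/
theorem stmt10 (n : ℕ) (hn : 1 ≤ n) (Δ : Subgroup (SL (n+1) ℤ)) (hΔ : Δ.FiniteIndex)
    (γ : SL (n+1) ℤ) :
    let Δ' : Subgroup (SL (n+1) ℝ) := Δ.map (mapSL n)
    let S : Set (SL (n+1) ℝ) :=
      {g | ∃ δ ∈ Δ, ∃ h ∈ stab n ℝ, ∃ y : ℝ, 1 ≤ y ∧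
        (g : Matrix (Fin (n+1)) (Fin (n+1)) ℝ)
          = ((mapSL n (δ * γ) : SL (n+1) ℝ) : Matrix (Fin (n+1)) (Fin (n+1)) ℝ)
              * ((h : SL (n+1) ℝ) : Matrix (Fin (n+1)) (Fin (n+1)) ℝ) * aMat n y}
    IsClosed (Quotient.mk (QuotientGroup.rightRel Δ') '' S) := by
  intro Δ' S
  -- `S` is closed in `SL (n+1) ℝ`.
  have hSclosed : IsClosed S := by
    classical
    set cast : (Fin (n+1) → ℤ) → (Fin (n+1) → ℝ) := fun v => (Int.castRingHom ℝ) ∘ v with hcast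
    set V : Set (Fin (n+1) → ℤ) :=
      {v | ∃ δ ∈ Δ, v = lastVec n ℤ ᵥ* (((δ * γ)⁻¹ : SL (n+1) ℤ) : Matrix (Fin (n+1)) (Fin (n+1)) ℤ)}
      with hV
    set F : (Fin (n+1) → ℤ) → Set (Matrix (Fin (n+1)) (Fin (n+1)) ℝ) :=
      fun v => {M | v ∈ V ∧ M.det = 1 ∧ (cast v) ᵥ* M ∈ Kc n} with hF
    have hFclosed : ∀ v, IsClosed (F v) := by
      intro v
      by_cases hv : v ∈ V
      · have he : F v = Matrix.det ⁻¹' {(1:ℝ)} ∩ (fun M => (cast v) ᵥ* M) ⁻¹' Kc n := by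
          ext M
          simp only [hF, Set.mem_setOf_eq, Set.mem_inter_iff, Set.mem_preimage,
            Set.mem_singleton_iff, hv, true_and]
        rw [he]
        exact (isClosed_singleton.preimage continuous_id.matrix_det).inter
          ((isClosed_Kc n).preimage (continuous_const.matrix_vecMul continuous_id))
      · have he : F v = ∅ := by
          ext M; simp [hF, hv]
        rw [he]; exact isClosed_empty
    have hLF : LocallyFinite F := by
      intro M₀
      by_cases hdet : M₀.det = 1
      · set f : Matrix (Fin (n+1)) (Fin (n+1)) ℝ → (Fin (n+1) → ℝ) :=
          fun M => lastVec n ℝ ᵥ* (adjugate M) with hf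
        have hfc : Continuous f := continuous_const.matrix_vecMul continuous_id.matrix_adjugate
        set C : Fin (n+1) → ℝ := fun i => |f M₀ i| + 1 with hC
        set U : Set (Matrix (Fin (n+1)) (Fin (n+1)) ℝ) :=
          ⋂ i, (fun M => |f M i|) ⁻¹' Set.Iio (C i) with hU
        refine ⟨U, ?_, ?_⟩
        · refine IsOpen.mem_nhds ?_ ?_
          · exact isOpen_iInter_of_finite fun i =>
              isOpen_Iio.preimage (((continuous_apply i).comp hfc).abs)
          · simp only [hU, Set.mem_iInter, Set.mem_preimage, Set.mem_Iio, hC]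
            intro i; linarith [abs_nonneg (f M₀ i)]
        · have hsub : {v | (F v ∩ U).Nonempty} ⊆
              Set.pi Set.univ (fun i => Set.Icc (-⌈C i⌉) ⌈C i⌉) := by
            rintro v ⟨M, ⟨hvV, hMdet, hMK⟩, hMU⟩
            intro i _
            have key : cast v = ((cast v ᵥ* M) ᵥ* adjugate M) := by
              rw [vecMul_vecMul, mul_adjugate, hMdet, one_smul, vecMul_one]
            have hu := Kc_eq_smul hMK
            set t : ℝ := (cast v ᵥ* M) (Fin.last n) with hht
            have ht : t ∈ Set.Icc (0:ℝ) 1 := by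
              have h := hMK (Fin.last n); rw [if_pos rfl] at h; exact h
            have hvi : (v i : ℝ) = t * f M i := by
              have : cast v i = (t • (lastVec n ℝ ᵥ* adjugate M)) i := by
                conv_lhs => rw [key, hu]
                rw [smul_vecMul]
              simpa [hcast, hf] using this
            have hMU' : |f M i| < C i := by
              rw [hU] at hMU
              simp only [Set.mem_iInter, Set.mem_preimage, Set.mem_Iio] at hMU
              exact hMU i
            have hb : |(v i : ℝ)| < C i := by
              rw [hvi, abs_mul]
              have h1 : |t| ≤ 1 := by rw [abs_le]; constructor <;> linarith [ht.1, ht.2]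
              calc |t| * |f M i| ≤ 1 * |f M i| :=
                    mul_le_mul_of_nonneg_right h1 (abs_nonneg _)
                _ = |f M i| := one_mul _
                _ < C i := hMU'
            have habs := abs_lt.mp hb
            have hceil : C i ≤ (⌈C i⌉ : ℝ) := Int.le_ceil _
            constructor
            · have h1 : ((-⌈C i⌉ : ℤ) : ℝ) ≤ ((v i : ℤ) : ℝ) := by push_cast; linarith
              exact_mod_cast h1
            · have h1 : ((v i : ℤ) : ℝ) ≤ ((⌈C i⌉ : ℤ) : ℝ) := by push_cast; linarith
              exact_mod_cast h1
          exact Set.Finite.subset (Set.Finite.pi fun i => Set.finite_Icc _ _) hsub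
      · refine ⟨Matrix.det ⁻¹' {(1:ℝ)}ᶜ,
          IsOpen.mem_nhds (isClosed_singleton.isOpen_compl.preimage continuous_id.matrix_det)
            hdet, ?_⟩
        convert Set.finite_empty
        ext v
        simp only [Set.mem_setOf_eq, Set.mem_empty_iff_false, iff_false]
        rintro ⟨M, ⟨_, h1, _⟩, h2⟩
        exact h2 h1
    have hSeq : S = (fun A : SL (n+1) ℝ => (A : Matrix (Fin (n+1)) (Fin (n+1)) ℝ)) ⁻¹'
        (⋃ v, F v) := by
      ext g
      constructor
      · rintro ⟨δ, hδ, h, hh, y, hy, heq⟩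
        refine Set.mem_preimage.mpr (Set.mem_iUnion.mpr
          ⟨lastVec n ℤ ᵥ* (((δ * γ)⁻¹ : SL (n+1) ℤ) : Matrix (Fin (n+1)) (Fin (n+1)) ℤ),
            ⟨δ, hδ, rfl⟩, Matrix.SpecialLinearGroup.det_coe g, ?_⟩)
        rw [heq, ← vecMul_vecMul, ← vecMul_vecMul, castv_vecMul_map (δ * γ), hh,
          lastVec_vecMul_aMat]
        exact smul_lastVec_mem_Kc hy
      · intro hg
        obtain ⟨v, ⟨δ, hδ, hveq⟩, hdet, hKc⟩ := Set.mem_iUnion.mp (Set.mem_preimage.mp hg)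
        set m : SL (n+1) ℤ := δ * γ with hm
        set t : ℝ := (cast v ᵥ* (g : Matrix (Fin (n+1)) (Fin (n+1)) ℝ)) (Fin.last n) with hht
        have hu : cast v ᵥ* (g : Matrix (Fin (n+1)) (Fin (n+1)) ℝ) = t • lastVec n ℝ :=
          Kc_eq_smul hKc
        have ht : t ∈ Set.Icc (0:ℝ) 1 := by
          have h := hKc (Fin.last n); rw [if_pos rfl] at h; exact h
        have hmap : cast v ᵥ* ((mapSL n m : SL (n+1) ℝ) : Matrix (Fin (n+1)) (Fin (n+1)) ℝ)
            = lastVec n ℝ := by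
          rw [hcast, hveq]; exact castv_vecMul_map m
        have ht0 : 0 < t := by
          rcases lt_or_eq_of_le ht.1 with h | h
          · exact h
          · exfalso
            have hz : cast v = 0 := by
              have h1 : cast v = (cast v ᵥ* (g : Matrix (Fin (n+1)) (Fin (n+1)) ℝ))
                  ᵥ* ((g⁻¹ : SL (n+1) ℝ) : Matrix (Fin (n+1)) (Fin (n+1)) ℝ) :=
                (vecMul_coe_inv g (cast v)).symm
              rw [hu, ← h, zero_smul, zero_vecMul] at h1
              exact h1
            have h2 := hmap
            rw [hz, zero_vecMul] at h2
            have h3 := congrFun h2 (Fin.last n)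
            simp [lastVec, Pi.single_apply] at h3
        have hy1 : (1:ℝ) ≤ t⁻¹ := one_le_inv₀ ht0 |>.mpr ht.2
        set A : SL (n+1) ℝ := ⟨aMat n t⁻¹, det_aMat n hn (by positivity)⟩ with hA
        have hAv : lastVec n ℝ ᵥ* (A : Matrix (Fin (n+1)) (Fin (n+1)) ℝ) = t • lastVec n ℝ := by
          have := lastVec_vecMul_aMat n t⁻¹
          rw [inv_inv] at this
          exact this
        set h : SL (n+1) ℝ := (mapSL n m)⁻¹ * g * A⁻¹ with hhdef
        have hhstab : h ∈ stab n ℝ := by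
          show lastVec n ℝ ᵥ* ((h : SL (n+1) ℝ) : Matrix (Fin (n+1)) (Fin (n+1)) ℝ) = lastVec n ℝ
          rw [hhdef, Matrix.SpecialLinearGroup.coe_mul, Matrix.SpecialLinearGroup.coe_mul,
            ← vecMul_vecMul, ← vecMul_vecMul, lastVec_vecMul_map_inv m, ← hveq,
            show (⇑(Int.castRingHom ℝ) ∘ v) = cast v from rfl, hu, ← hAv, vecMul_coe_inv]
        refine ⟨δ, hδ, h, hhstab, t⁻¹, hy1, ?_⟩
        have hgrp : g = mapSL n m * h * A := by rw [hhdef]; group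
        rw [hgrp, Matrix.SpecialLinearGroup.coe_mul, Matrix.SpecialLinearGroup.coe_mul]
    rw [hSeq]
    exact (hLF.isClosed_iUnion hFclosed).preimage continuous_induced_dom
  -- reduce the quotient statement to `hSclosed`
  have hquot : Topology.IsQuotientMap (Quotient.mk (QuotientGroup.rightRel Δ')) := isQuotientMap_quot_mk
  rw [← hquot.isClosed_preimage]
  have hsat : (Quotient.mk (QuotientGroup.rightRel Δ')) ⁻¹'
      ((Quotient.mk (QuotientGroup.rightRel Δ')) '' S) = S := by
    apply Set.Subset.antisymm
    · rintro x ⟨g, hg, hgx⟩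
      have hrel : x * g⁻¹ ∈ Δ' := by
        have h1 := Quotient.exact hgx
        exact (QuotientGroup.rightRel_apply).mp h1
      obtain ⟨δ₀, hδ₀, hδ₀eq⟩ := hrel
      obtain ⟨δ, hδ, h, hh, y, hy, heq⟩ := hg
      refine ⟨δ₀ * δ, mul_mem hδ₀ hδ, h, hh, y, hy, ?_⟩
      have hx : x = mapSL n δ₀ * g := by
        rw [hδ₀eq]; group
      rw [hx, Matrix.SpecialLinearGroup.coe_mul, heq,
        show δ₀ * δ * γ = δ₀ * (δ * γ) from by group, MonoidHom.map_mul (mapSL n) δ₀ (δ * γ),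
        Matrix.SpecialLinearGroup.coe_mul]
      simp only [mul_assoc]
    · exact Set.subset_preimage_image _ _
  rw [hsat]
  exact hSclosed
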